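/- For every measurable g : 𝒱 → ℝ such that the displayed random variables are integrable, E[(A·Y/π(X) − (1−A)·Y/(1−π(X)) − (Y¹−Y⁰))·g(V)] = 0. -/

import Mathlib

open MeasureTheory ProbabilityTheory

/-- The inverse-probability-weighted pseudo-outcome `A·Y/π(X) − (1−A)·Y/(1−π(X))`. -/
noncomputable def ipwPseudo {Ω 𝓧 : Type*} (A Y : Ω → ℝ) (X : Ω → 𝓧) (pr : 𝓧 → ℝ)
    (ω : Ω) : ℝ :=
  A ω * Y ω / pr (X ω) - (1 - A ω) * Y ω / (1 - pr (X ω))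

private theorem ipw_aux {Ω 𝓧 𝓥 : Type*} (mX mW : MeasurableSpace Ω)
    [mΩ : MeasurableSpace Ω] [StandardBorelSpace Ω]
    [MeasurableSpace 𝓧] [MeasurableSpace 𝓥]
    (P : Measure Ω) [IsProbabilityMeasure P]
    (X : Ω → 𝓧) (hX : Measurable X) (v : 𝓧 → 𝓥) (hv : Measurable v)
    (A Y0 Y1 Y : Ω → ℝ) (hA : Measurable A) (hY0 : Measurable Y0) (hY1 : Measurable Y1)
    (hA01 : ∀ ω, A ω = 0 ∨ A ω = 1)
    (hYdef : ∀ ω, Y ω = A ω * Y1 ω + (1 - A ω) * Y0 ω)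
    (pr : 𝓧 → ℝ) (hprm : Measurable pr) (hpr : ∀ x, 0 < pr x ∧ pr x < 1)
    (heX : mX = MeasurableSpace.comap X inferInstance)
    (heW : mW = MeasurableSpace.comap (fun ω => (Y0 ω, Y1 ω)) inferInstance)
    (hmX : mX ≤ mΩ)
    (hprCE : (fun ω => pr (X ω)) =ᵐ[P] P[A | mX])
    (hCE : CondIndepFun mX hmX (fun ω => (Y0 ω, Y1 ω)) A P)
    (g : 𝓥 → ℝ) (hg : Measurable g)
    (hI : Integrable (fun ω => (ipwPseudo A Y X pr ω - (Y1 ω - Y0 ω)) * g (v (X ω))) P)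
    (hI' : Integrable (fun ω => ipwPseudo A Y X pr ω - (Y1 ω - Y0 ω)) P) :
    ∫ ω, (ipwPseudo A Y X pr ω - (Y1 ω - Y0 ω)) * g (v (X ω)) ∂P = 0 := by
  classical
  have hW : Measurable (fun ω => (Y0 ω, Y1 ω)) := hY0.prodMk hY1
  have hmW : mW ≤ mΩ := heW ▸ hW.comap_le
  have hm2 : mX ⊔ mW ≤ mΩ := sup_le hmX hmW
  have hmemX : ∀ {s : Set 𝓧}, MeasurableSet s → MeasurableSet[mX] (X ⁻¹' s) :=
    fun {s} hs => heX ▸ ⟨s, hs, rfl⟩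
  have hmemW : ∀ {t : Set (ℝ × ℝ)}, MeasurableSet t →
      MeasurableSet[mW] ((fun ω => (Y0 ω, Y1 ω)) ⁻¹' t) :=
    fun {t} ht => heW ▸ ⟨t, ht, rfl⟩
  have hXmX : Measurable[mX] X := fun s hs => hmemX hs
  have hWmW : Measurable[mW] (fun ω => (Y0 ω, Y1 ω)) := fun t ht => hmemW ht
  have hprX : Measurable[mX] (fun ω => pr (X ω)) := hprm.comp hXmX
  have hY0m : Measurable[mW] Y0 := measurable_fst.comp hWmW
  have hY1m : Measurable[mW] Y1 := measurable_snd.comp hWmW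
  -- integrability of bounded measurable functions
  have intBdd : ∀ (f : Ω → ℝ) (C : ℝ), AEStronglyMeasurable f P → (∀ ω, |f ω| ≤ C) →
      Integrable f P := by
    intro f C hfm hb
    exact ⟨hfm, HasFiniteIntegral.of_bounded (C := C)
      (Filter.Eventually.of_forall (by simpa [Real.norm_eq_abs] using hb))⟩
  have hAbd : ∀ ω, |A ω| ≤ 1 := by
    intro ω; rcases hA01 ω with h | h <;> simp [h]
  have hAint : Integrable A P := intBdd A 1 hA.aestronglyMeasurable hAbd
  have hprbd : ∀ ω, |pr (X ω)| ≤ 1 := by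
    intro ω; obtain ⟨h0, h1⟩ := hpr (X ω)
    rw [abs_le]; constructor <;> nlinarith
  have hprI : Integrable (fun ω => pr (X ω)) P :=
    intBdd _ 1 (hprm.comp hX).aestronglyMeasurable hprbd
  -- A as an indicator
  have hs1 : MeasurableSet (A ⁻¹' {1}) := hA (measurableSet_singleton 1)
  have hAind : ∀ ω, A ω = (A ⁻¹' {1}).indicator (fun _ => (1 : ℝ)) ω := by
    intro ω
    rcases hA01 ω with h | h
    · have : ω ∉ A ⁻¹' {1} := by simp [Set.mem_preimage, h]
      simp [Set.indicator_of_notMem this, h]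
    · have : ω ∈ A ⁻¹' {1} := by simp [Set.mem_preimage, h]
      simp [Set.indicator_of_mem this, h]
  -- conditional independence, set version
  have hCI := (condIndepFun_iff_condExp_inter_preimage_eq_mul
    (m' := mX) (hm' := hmX) (μ := P) hW hA).mp hCE
  -- µ⟦A⁻¹'{1}|mX⟧ = pr ∘ X a.e.
  have hs1CE : (P⟦A ⁻¹' {1} | mX⟧) =ᵐ[P] fun ω => pr (X ω) := by
    have h1 : (P⟦A ⁻¹' {1} | mX⟧) =ᵐ[P] P[A | mX] :=
      condExp_congr_ae (Filter.Eventually.of_forall fun ω => (hAind ω).symm)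
    exact h1.trans hprCE.symm
  -- the generating π-system of mX ⊔ mW
  have hgen : mX ⊔ mW = MeasurableSpace.generateFrom
      {u : Set Ω | ∃ s t, MeasurableSet s ∧ MeasurableSet t ∧
        u = X ⁻¹' s ∩ (fun ω => (Y0 ω, Y1 ω)) ⁻¹' t} := by
    refine le_antisymm (sup_le ?_ ?_) (MeasurableSpace.generateFrom_le ?_)
    · rw [heX]
      rintro u ⟨s, hs, rfl⟩
      exact MeasurableSpace.measurableSet_generateFrom
        ⟨s, Set.univ, hs, MeasurableSet.univ, by simp⟩
    · rw [heW]
      rintro u ⟨t, ht, rfl⟩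
      exact MeasurableSpace.measurableSet_generateFrom
        ⟨Set.univ, t, MeasurableSet.univ, ht, by simp⟩
    · rintro u ⟨s, t, hs, ht, rfl⟩
      exact MeasurableSet.inter ((le_sup_left : mX ≤ mX ⊔ mW) _ (hmemX hs))
        ((le_sup_right : mW ≤ mX ⊔ mW) _ (hmemW ht))
  have hPi : IsPiSystem {u : Set Ω | ∃ s t, MeasurableSet s ∧ MeasurableSet t ∧
      u = X ⁻¹' s ∩ (fun ω => (Y0 ω, Y1 ω)) ⁻¹' t} := by
    rintro u ⟨s, t, hs, ht, rfl⟩ u' ⟨s', t', hs', ht', rfl⟩ -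
    refine ⟨s ∩ s', t ∩ t', hs.inter hs', ht.inter ht', ?_⟩
    ext ω; simp only [Set.mem_inter_iff, Set.mem_preimage]; tauto
  have htotal : ∫ ω, pr (X ω) ∂P = ∫ ω, A ω ∂P := by
    rw [integral_congr_ae hprCE, integral_condExp hmX]
  -- the basic case of the π-system induction
  have hbasic : ∀ u ∈ {u : Set Ω | ∃ s t, MeasurableSet s ∧ MeasurableSet t ∧
      u = X ⁻¹' s ∩ (fun ω => (Y0 ω, Y1 ω)) ⁻¹' t},
      ∫ ω in u, pr (X ω) ∂P = ∫ ω in u, A ω ∂P := by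
    rintro u ⟨s, t, hs, ht, rfl⟩
    set x := X ⁻¹' s with hxdef
    set w := (fun ω => (Y0 ω, Y1 ω)) ⁻¹' t with hwdef
    have hxm : MeasurableSet x := hX hs
    have hwm : MeasurableSet w := hW ht
    have hxmX : MeasurableSet[mX] x := hmemX hs
    set iw : Ω → ℝ := w.indicator (fun _ => 1) with hiwdef
    have hiwbd : ∀ ω, |iw ω| ≤ 1 := by
      intro ω; by_cases h : ω ∈ w <;> simp [hiwdef, h]
    have hiwm : Measurable iw := measurable_const.indicator hwm
    have hiwI : Integrable iw P := intBdd iw 1 hiwm.aestronglyMeasurable hiwbd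
    have hprodI : Integrable (fun ω => pr (X ω) * iw ω) P := by
      refine intBdd _ 1 ((hprm.comp hX).mul hiwm).aestronglyMeasurable fun ω => ?_
      rw [abs_mul]
      calc |pr (X ω)| * |iw ω| ≤ 1 * 1 :=
            mul_le_mul (hprbd ω) (hiwbd ω) (abs_nonneg _) zero_le_one
        _ = 1 := by ring
    have hwints1I : Integrable ((w ∩ A ⁻¹' {1}).indicator (fun _ => (1 : ℝ))) P := by
      refine intBdd _ 1 (measurable_const.indicator (hwm.inter hs1)).aestronglyMeasurable
        fun ω => ?_
      by_cases h : ω ∈ w ∩ A ⁻¹' {1} <;> simp [h]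
    -- conditional independence applied to t and {1}
    have hCIwt : (P⟦w ∩ A ⁻¹' {1} | mX⟧) =ᵐ[P]
        fun ω => (P⟦w | mX⟧) ω * (P⟦A ⁻¹' {1} | mX⟧) ω :=
      hCI t {1} ht (measurableSet_singleton 1)
    -- RHS computation
    have hRHS : ∫ ω in x ∩ w, A ω ∂P
        = ∫ ω in x, (P⟦w | mX⟧) ω * pr (X ω) ∂P := by
      have e1 : ∫ ω in x ∩ w, A ω ∂P = ∫ ω in x, w.indicator A ω ∂P :=
        (setIntegral_indicator hwm).symm
      have e2 : w.indicator A = (w ∩ A ⁻¹' {1}).indicator (fun _ => (1 : ℝ)) := by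
        funext ω
        by_cases h : ω ∈ w
        · by_cases h' : ω ∈ A ⁻¹' {1}
          · simp [Set.indicator_of_mem h, Set.indicator_of_mem (Set.mem_inter h h'),
              hAind ω, Set.indicator_of_mem h']
          · have hni : ω ∉ w ∩ A ⁻¹' {1} := fun hc => h' hc.2
            simp [Set.indicator_of_mem h, Set.indicator_of_notMem hni, hAind ω,
              Set.indicator_of_notMem h']
        · have hni : ω ∉ w ∩ A ⁻¹' {1} := fun hc => h hc.1
          simp [Set.indicator_of_notMem h, Set.indicator_of_notMem hni]
      have e3 : ∫ ω in x, (w ∩ A ⁻¹' {1}).indicator (fun _ => (1 : ℝ)) ω ∂P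
          = ∫ ω in x, (P⟦w ∩ A ⁻¹' {1} | mX⟧) ω ∂P :=
        (setIntegral_condExp hmX hwints1I hxmX).symm
      have e4 : ∫ ω in x, (P⟦w ∩ A ⁻¹' {1} | mX⟧) ω ∂P
          = ∫ ω in x, (P⟦w | mX⟧) ω * pr (X ω) ∂P := by
        refine setIntegral_congr_ae (hmX _ hxmX) ?_
        filter_upwards [hCIwt, hs1CE] with ω h1 h2 _
        rw [h1, h2]
      rw [e1, e2, e3, e4]
    -- LHS computation
    have hLHS : ∫ ω in x ∩ w, pr (X ω) ∂P
        = ∫ ω in x, pr (X ω) * (P⟦w | mX⟧) ω ∂P := by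
      have e1 : ∫ ω in x ∩ w, pr (X ω) ∂P
          = ∫ ω in x, w.indicator (fun ω => pr (X ω)) ω ∂P :=
        (setIntegral_indicator hwm).symm
      have e2 : w.indicator (fun ω => pr (X ω)) = (fun ω => pr (X ω)) * iw := by
        funext ω
        by_cases h : ω ∈ w <;>
          simp [Set.indicator_of_mem, Set.indicator_of_notMem, h, hiwdef]
      have hprodI' : Integrable ((fun ω => pr (X ω)) * iw) P := by
        simpa [Pi.mul_def] using hprodI
      have hmul : P[(fun ω => pr (X ω)) * iw | mX] =ᵐ[P]
          (fun ω => pr (X ω)) * P[iw | mX] :=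
        condExp_mul_of_stronglyMeasurable_left hprX.stronglyMeasurable hprodI' hiwI
      have e4 : ∫ ω in x, ((fun ω => pr (X ω)) * iw) ω ∂P
          = ∫ ω in x, (P[(fun ω => pr (X ω)) * iw | mX]) ω ∂P :=
        (setIntegral_condExp hmX hprodI' hxmX).symm
      have e5 : ∫ ω in x, (P[(fun ω => pr (X ω)) * iw | mX]) ω ∂P
          = ∫ ω in x, pr (X ω) * (P⟦w | mX⟧) ω ∂P := by
        refine setIntegral_congr_ae (hmX _ hxmX) ?_
        filter_upwards [hmul] with ω h1 _
        rw [h1]; simp [hiwdef]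
      rw [e1, e2, e4, e5]
    rw [hLHS, hRHS]
    exact integral_congr_ae (Filter.Eventually.of_forall fun ω => mul_comm _ _)
  -- π-system induction: integrals agree on all (mX ⊔ mW)-sets
  have hInd : ∀ u, MeasurableSet[mX ⊔ mW] u →
      ∫ ω in u, pr (X ω) ∂P = ∫ ω in u, A ω ∂P := by
    intro u hu
    refine MeasurableSpace.induction_on_inter (m := mX ⊔ mW)
      (C := fun u _ => ∫ ω in u, pr (X ω) ∂P = ∫ ω in u, A ω ∂P) hgen hPi (by simp)
      hbasic ?_ ?_ u hu
    · intro t htm hC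
      have h1 := integral_add_compl (hm2 _ htm) hprI
      have h2 := integral_add_compl (hm2 _ htm) hAint
      linarith
    · intro f hdisj hfm hC
      rw [integral_iUnion (fun i => hm2 _ (hfm i)) hdisj hprI.integrableOn,
        integral_iUnion (fun i => hm2 _ (hfm i)) hdisj hAint.integrableOn]
      exact tsum_congr hC
  -- conditional expectation of A given mX ⊔ mW
  have hAm2 : (fun ω => pr (X ω)) =ᵐ[P] P[A | mX ⊔ mW] := by
    refine ae_eq_condExp_of_forall_setIntegral_eq hm2 hAint
      (fun u hu _ => hprI.integrableOn) (fun u hu _ => hInd u hu) ?_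
    exact ((hprX.mono (le_sup_left : mX ≤ mX ⊔ mW) le_rfl).stronglyMeasurable).aestronglyMeasurable
  -- the main objects
  have hHm2 : StronglyMeasurable[mX ⊔ mW]
      (fun ω => Y1 ω / pr (X ω) + Y0 ω / (1 - pr (X ω))) := by
    have h1 : Measurable[mX ⊔ mW] Y1 := hY1m.mono le_sup_right le_rfl
    have h0 : Measurable[mX ⊔ mW] Y0 := hY0m.mono le_sup_right le_rfl
    have hp : Measurable[mX ⊔ mW] (fun ω => pr (X ω)) := hprX.mono le_sup_left le_rfl
    exact ((h1.div hp).add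
      (h0.div ((measurable_const : Measurable[mX ⊔ mW] fun _ => (1:ℝ)).sub hp))).stronglyMeasurable
  have hEq : ∀ ω, ipwPseudo A Y X pr ω - (Y1 ω - Y0 ω)
      = (Y1 ω / pr (X ω) + Y0 ω / (1 - pr (X ω))) * (A ω - pr (X ω)) := by
    intro ω
    obtain ⟨h0, h1⟩ := hpr (X ω)
    have hne0 : pr (X ω) ≠ 0 := ne_of_gt h0
    have hne1 : (1 : ℝ) - pr (X ω) ≠ 0 := sub_ne_zero.mpr h1.ne'
    rcases hA01 ω with h | h <;>
      simp only [ipwPseudo, hYdef ω, h] <;> field_simp <;> ring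
  have hsubbd : ∀ ω, |A ω - pr (X ω)| ≤ 1 := by
    intro ω
    obtain ⟨h0, h1⟩ := hpr (X ω)
    rcases hA01 ω with h | h <;> rw [h, abs_le] <;> constructor <;> nlinarith
  have hsubI : Integrable (fun ω => A ω - pr (X ω)) P :=
    intBdd _ 1 (hA.sub (hprm.comp hX)).aestronglyMeasurable hsubbd
  have hHe : Integrable ((fun ω => Y1 ω / pr (X ω) + Y0 ω / (1 - pr (X ω)))
      * fun ω => A ω - pr (X ω)) P := by
    refine (integrable_congr ?_).mp hI'
    exact Filter.Eventually.of_forall fun ω => hEq ω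
  -- conditional expectation of e given mX ⊔ mW is 0
  have hstep2 : P[(fun ω => ipwPseudo A Y X pr ω - (Y1 ω - Y0 ω)) | mX ⊔ mW] =ᵐ[P] 0 := by
    have h1 : P[(fun ω => ipwPseudo A Y X pr ω - (Y1 ω - Y0 ω)) | mX ⊔ mW] =ᵐ[P]
        P[(fun ω => Y1 ω / pr (X ω) + Y0 ω / (1 - pr (X ω)))
          * (fun ω => A ω - pr (X ω)) | mX ⊔ mW] :=
      condExp_congr_ae (Filter.Eventually.of_forall hEq)
    have h2 := condExp_mul_of_stronglyMeasurable_left (μ := P) hHm2 hHe hsubI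
    have h5 : P[(fun ω => pr (X ω)) | mX ⊔ mW] = fun ω => pr (X ω) :=
      condExp_of_stronglyMeasurable hm2
        ((hprX.mono (le_sup_left : mX ≤ mX ⊔ mW) le_rfl).stronglyMeasurable) hprI
    have h3 : P[(fun ω => A ω - pr (X ω)) | mX ⊔ mW] =ᵐ[P] 0 := by
      have h6 : P[A - (fun ω => pr (X ω)) | mX ⊔ mW] =ᵐ[P]
          P[A | mX ⊔ mW] - P[(fun ω => pr (X ω)) | mX ⊔ mW] :=
        condExp_sub hAint hprI _
      have h7 : (fun ω => A ω - pr (X ω)) = A - fun ω => pr (X ω) := rfl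
      rw [h7]
      filter_upwards [h6, hAm2] with ω hω1 hω2
      simp only [Pi.sub_apply, Pi.zero_apply] at *
      rw [hω1, h5, ← hω2]
      ring
    filter_upwards [h1, h2, h3] with ω hω1 hω2 hω3
    simp only [Pi.mul_apply, Pi.zero_apply] at *
    rw [hω1, hω2, hω3, mul_zero]
  -- conditional expectation of e given mX is 0
  have hstep3 : P[(fun ω => ipwPseudo A Y X pr ω - (Y1 ω - Y0 ω)) | mX] =ᵐ[P] 0 := by
    have h1 := condExp_condExp_of_le (μ := P)
      (f := fun ω => ipwPseudo A Y X pr ω - (Y1 ω - Y0 ω))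
      (le_sup_left : mX ≤ mX ⊔ mW) hm2
    have h2 : P[P[(fun ω => ipwPseudo A Y X pr ω - (Y1 ω - Y0 ω)) | mX ⊔ mW] | mX]
        =ᵐ[P] P[(0 : Ω → ℝ) | mX] := condExp_congr_ae hstep2
    refine h1.symm.trans (h2.trans ?_)
    rw [condExp_zero]
  -- conclusion
  have hGmX : StronglyMeasurable[mX] (fun ω => g (v (X ω))) :=
    ((hg.comp hv).comp hXmX).stronglyMeasurable
  have hGe : Integrable ((fun ω => g (v (X ω)))
      * fun ω => ipwPseudo A Y X pr ω - (Y1 ω - Y0 ω)) P := by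
    refine (integrable_congr ?_).mp hI
    exact Filter.Eventually.of_forall fun ω => mul_comm _ _
  have h4 := condExp_mul_of_stronglyMeasurable_left (μ := P) hGmX hGe hI'
  have h5 : P[(fun ω => g (v (X ω)))
      * (fun ω => ipwPseudo A Y X pr ω - (Y1 ω - Y0 ω)) | mX] =ᵐ[P] 0 := by
    filter_upwards [h4, hstep3] with ω hω1 hω2
    simp only [Pi.mul_apply, Pi.zero_apply] at *
    rw [hω1, hω2, mul_zero]
  calc ∫ ω, (ipwPseudo A Y X pr ω - (Y1 ω - Y0 ω)) * g (v (X ω)) ∂P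
      = ∫ ω, ((fun ω => g (v (X ω)))
          * fun ω => ipwPseudo A Y X pr ω - (Y1 ω - Y0 ω)) ω ∂P :=
        integral_congr_ae (Filter.Eventually.of_forall fun ω => mul_comm _ _)
    _ = ∫ ω, (P[(fun ω => g (v (X ω)))
          * (fun ω => ipwPseudo A Y X pr ω - (Y1 ω - Y0 ω)) | mX]) ω ∂P :=
        (integral_condExp hmX).symm
    _ = ∫ ω, (0 : Ω → ℝ) ω ∂P := integral_congr_ae h5
    _ = 0 := by simp

/-- the error of the IPW pseudo-outcome relative to the individual treatment
effect is orthogonal to every measurable function of `V`. -/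
theorem stmt1 {Ω 𝓧 𝓥 : Type*} [MeasurableSpace Ω] [StandardBorelSpace Ω]
    [MeasurableSpace 𝓧] [MeasurableSpace 𝓥]
    (P : Measure Ω) [IsProbabilityMeasure P]
    (X : Ω → 𝓧) (hX : Measurable X) (v : 𝓧 → 𝓥) (hv : Measurable v)
    (A Y0 Y1 Y : Ω → ℝ) (hA : Measurable A) (hY0 : Measurable Y0) (hY1 : Measurable Y1)
    (hA01 : ∀ ω, A ω = 0 ∨ A ω = 1)
    (hYdef : ∀ ω, Y ω = A ω * Y1 ω + (1 - A ω) * Y0 ω)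
    (pr : 𝓧 → ℝ) (hprm : Measurable pr) (hpr : ∀ x, 0 < pr x ∧ pr x < 1)
    (hprCE : (fun ω => pr (X ω)) =ᵐ[P] P[A | MeasurableSpace.comap X inferInstance])
    (hCE : CondIndepFun (MeasurableSpace.comap X inferInstance) hX.comap_le
      (fun ω => (Y0 ω, Y1 ω)) A P)
    (g : 𝓥 → ℝ) (hg : Measurable g)
    (hI : Integrable (fun ω => (ipwPseudo A Y X pr ω - (Y1 ω - Y0 ω)) * g (v (X ω))) P)
    (hI' : Integrable (fun ω => ipwPseudo A Y X pr ω - (Y1 ω - Y0 ω)) P) :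
    ∫ ω, (ipwPseudo A Y X pr ω - (Y1 ω - Y0 ω)) * g (v (X ω)) ∂P = 0 :=
  ipw_aux (MeasurableSpace.comap X inferInstance)
    (MeasurableSpace.comap (fun ω => (Y0 ω, Y1 ω)) inferInstance)
    P X hX v hv A Y0 Y1 Y hA hY0 hY1 hA01 hYdef pr hprm hpr rfl rfl
    hX.comap_le hprCE hCE g hg hI hI'
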